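/- Let λ_1, …, λ_r ∈ R, a_1, …, a_r > 0, ε > 0, σ > 0, with σ < min_i a_i and ε < 1. Consider the system of inequalities in k = (k_1,…,k_r) ∈ Z^r: ‖k_i λ_i‖ < ε for all i, and |k_1 a_1 − k_i a_i| < σ for i ≥ 2. Then there is a sequence of solutions k^{(l)} ∈ Z^r with ‖k^{(l)}‖ → ∞, bounded gap, and, after replacing k^{(l)} by −k^{(l)} where necessary, all components k_i^{(l)} positive and tending to infinity. Moreover all components can be made divisible by any prescribed N ∈ N. -/

import Mathlib

open Filter


private lemma round_dist_triangle (x y : ℝ) :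
    |x - round x| ≤ |y - round y| + |x - y| := by
  calc |x - round x| ≤ |x - round y| := round_le x (round y)
    _ ≤ |x - y| + |y - round y| := by
        have := abs_sub_abs_le_abs_sub x y
        calc |x - round y| = |(x - y) + (y - round y)| := by ring_nf
          _ ≤ |x - y| + |y - round y| := abs_add_le _ _
    _ = |y - round y| + |x - y| := by ring

private lemma round_periodic (x : ℝ) (k : ℤ) :
    |(x + k) - round (x + k)| = |x - round x| := by
  rw [round_add_intCast]; push_cast; ring_nf

private lemma cont_round_dist (c : ℝ) :
    Continuous (fun y : ℝ => |(y - c) - round (y - c)|) := by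
  have : LipschitzWith 1 (fun y : ℝ => |(y - c) - round (y - c)|) := by
    apply LipschitzWith.of_dist_le_mul
    intro x y
    simp only [NNReal.coe_one, one_mul, Real.dist_eq]
    have h1 := round_dist_triangle (x - c) (y - c)
    have h2 := round_dist_triangle (y - c) (x - c)
    have hxy : |x - c - (y - c)| = |x - y| := by ring_nf
    have hyx : |y - c - (x - c)| = |x - y| := by rw [abs_sub_comm]; ring_nf
    rw [abs_le]; constructor <;> [skip; skip] <;> nlinarith [abs_nonneg (x-y)]
  exact this.continuous

/-- Bohr sets are syndetic in ℕ. -/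
lemma bohr_syndetic {ι : Type*} [Fintype ι] (β : ι → ℝ) (δ : ℝ) (hδ : 0 < δ) :
    ∃ M : ℕ, ∀ n : ℕ, ∃ p : ℕ, n ≤ p ∧ p ≤ n + M ∧
      ∀ j, |(p : ℝ) * β j - round ((p : ℝ) * β j)| < δ := by
  set x : ℕ → ι → ℝ := fun n j => Int.fract ((n : ℝ) * β j) with hx
  have hbd : Bornology.IsBounded (Set.range x) := by
    apply (Metric.isBounded_closedBall (x := (0 : ι → ℝ)) (r := 1)).subset
    rintro _ ⟨n, rfl⟩
    rw [Metric.mem_closedBall, dist_pi_le_iff zero_le_one]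
    intro j
    rw [Real.dist_eq, Pi.zero_apply, sub_zero, abs_of_nonneg (Int.fract_nonneg _)]
    exact (Int.fract_lt_one _).le
  have hC : IsCompact (closure (Set.range x)) := hbd.isCompact_closure
  set U : ℕ → Set (ι → ℝ) :=
    fun m => {y | ∀ j, |(y j - (m : ℝ) * β j) - round (y j - (m : ℝ) * β j)| < δ} with hU
  have hUopen : ∀ m, IsOpen (U m) := by
    intro m
    have : U m = ⋂ j, (fun y : ι → ℝ =>
        |(y j - (m : ℝ) * β j) - round (y j - (m : ℝ) * β j)|) ⁻¹' Set.Iio δ := by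
      ext y; simp [hU]
    rw [this]
    exact isOpen_iInter_of_finite fun j =>
      (((cont_round_dist ((m : ℝ) * β j)).comp (continuous_apply j))).isOpen_preimage _ isOpen_Iio
  have hcover : closure (Set.range x) ⊆ ⋃ m : ℕ, U m := by
    intro c hc
    rw [Metric.mem_closure_iff] at hc
    obtain ⟨y, ⟨n, rfl⟩, hdist⟩ := hc δ hδ
    refine Set.mem_iUnion.2 ⟨n, fun j => ?_⟩
    have hzero : |(x n j - (n : ℝ) * β j) - round (x n j - (n : ℝ) * β j)| = 0 := by
      have : x n j - (n : ℝ) * β j = ((-⌊(n : ℝ) * β j⌋ : ℤ) : ℝ) := by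
        show Int.fract ((n : ℝ) * β j) - (n : ℝ) * β j = _
        rw [← Int.self_sub_floor]; push_cast; ring
      rw [this, round_intCast, sub_self, abs_zero]
    have htri := round_dist_triangle (c j - (n : ℝ) * β j) (x n j - (n : ℝ) * β j)
    have hj : |c j - (n : ℝ) * β j - (x n j - (n : ℝ) * β j)| = |c j - x n j| := by ring_nf
    have hdj : dist (c j) (x n j) ≤ dist c (x n) := dist_le_pi_dist c (x n) j
    rw [Real.dist_eq] at hdj
    calc |(c j - (n : ℝ) * β j) - round (c j - (n : ℝ) * β j)|
        ≤ 0 + |c j - x n j| := by rw [← hzero]; rw [hj] at htri; exact htri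
      _ < δ := by rw [zero_add]; exact lt_of_le_of_lt hdj hdist
  obtain ⟨F, hF⟩ := hC.elim_finite_subcover U hUopen hcover
  refine ⟨F.sup id, fun n => ?_⟩
  have hmem : x (n + F.sup id) ∈ ⋃ m ∈ F, U m := hF (subset_closure ⟨n + F.sup id, rfl⟩)
  obtain ⟨m, hmF, hmU⟩ := Set.mem_iUnion₂.1 hmem
  have hmle : m ≤ F.sup id := Finset.le_sup (f := id) hmF
  refine ⟨n + F.sup id - m, le_trans (Nat.le_sub_of_add_le (by omega)) le_rfl, by omega, fun j => ?_⟩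
  have hj := hmU j
  have hcast : ((n + F.sup id - m : ℕ) : ℝ) = ((n + F.sup id : ℕ) : ℝ) - (m : ℝ) := by
    push_cast [Nat.cast_sub (by omega : m ≤ n + F.sup id)]; ring
  have hper : ((n + F.sup id - m : ℕ) : ℝ) * β j
      = (x (n + F.sup id) j - (m : ℝ) * β j) + ((⌊((n + F.sup id : ℕ) : ℝ) * β j⌋ : ℤ) : ℝ) := by
    show _ = (Int.fract (((n + F.sup id : ℕ) : ℝ) * β j) - (m : ℝ) * β j) + _
    rw [hcast, ← Int.self_sub_floor]; push_cast; ring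
  rw [hper, round_periodic]
  exact hj

set_option maxHeartbeats 1600000 in
/-- Action-matching step of the index recurrence theorem: given λ₁,…,λ_r ∈ ℝ,
positive a₁,…,a_r, 0 < ε < 1 and 0 < σ < min aᵢ, the system
‖kᵢλᵢ‖ < ε (all i), |k₁a₁ − kᵢaᵢ| < σ (i ≥ 2) has a sequence of integer
solutions with all components positive, tending to infinity, bounded gap, and
divisible by any prescribed N. (Here ‖t‖ is the distance to the nearest
integer.) -/
theorem action_matching_solutions (r : ℕ) (hr : 0 < r)
    (lam a : Fin r → ℝ) (ha : ∀ i, 0 < a i)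
    (ε σ : ℝ) (hε : 0 < ε) (hε1 : ε < 1) (hσ : 0 < σ) (hσa : ∀ i, σ < a i)
    (N : ℕ) (hN : 0 < N) :
    ∃ K : ℕ → (Fin r → ℤ),
      (∀ l i, |(K l i : ℝ) * lam i - round ((K l i : ℝ) * lam i)| < ε) ∧
      (∀ l i, |(K l ⟨0, hr⟩ : ℝ) * a ⟨0, hr⟩ - (K l i : ℝ) * a i| < σ) ∧
      (∀ l i, 0 < K l i) ∧
      (∀ i, Tendsto (fun l => K l i) atTop atTop) ∧
      (∃ G : ℤ, ∀ l i, |K (l + 1) i - K l i| ≤ G) ∧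
      (∀ l i, (N : ℤ) ∣ K l i) := by
  set i0 : Fin r := ⟨0, hr⟩ with hi0
  set A : ℝ := 1 + ∑ i, (|a i| + |lam i|) with hAdef
  have hA1 : 1 ≤ A := by
    have : (0:ℝ) ≤ ∑ i, (|a i| + |lam i|) :=
      Finset.sum_nonneg fun i _ => by positivity
    simp only [hAdef]; linarith
  have haA : ∀ i, a i ≤ A := by
    intro i
    have h1 : |a i| + |lam i| ≤ ∑ i, (|a i| + |lam i|) :=
      Finset.single_le_sum (f := fun i => |a i| + |lam i|)
        (fun i _ => by positivity) (Finset.mem_univ i)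
    have h2 := le_abs_self (a i)
    have h3 := abs_nonneg (lam i)
    simp only [hAdef]; linarith
  have hlamA : ∀ i, |lam i| ≤ A := by
    intro i
    have h1 : |a i| + |lam i| ≤ ∑ i, (|a i| + |lam i|) :=
      Finset.single_le_sum (f := fun i => |a i| + |lam i|)
        (fun i _ => by positivity) (Finset.mem_univ i)
    have h3 := abs_nonneg (a i)
    simp only [hAdef]; linarith
  have hN1 : (1:ℝ) ≤ N := by exact_mod_cast hN
  have hNA : (1:ℝ) ≤ N * A := by nlinarith
  set δ : ℝ := min σ ε / (4 * N * A) with hδdef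
  have hδpos : 0 < δ := by
    apply div_pos (lt_min hσ hε); nlinarith
  have hδeq : 4 * (N:ℝ) * A * δ = min σ ε := by
    rw [hδdef]; field_simp
  have hδσ : 4 * (N:ℝ) * A * δ ≤ σ := by rw [hδeq]; exact min_le_left _ _
  have hδε : 4 * (N:ℝ) * A * δ ≤ ε := by rw [hδeq]; exact min_le_right _ _
  set β : Fin r ⊕ Fin r → ℝ :=
    Sum.elim (fun i => a i0 / ((N:ℝ) * a i)) (fun i => a i0 * lam i / a i) with hβ
  obtain ⟨M, hM⟩ := bohr_syndetic β δ hδpos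
  obtain ⟨n₀, hn₀⟩ := exists_nat_ge ((N:ℝ) * A / a i0)
  choose p hp1 hp2 hp3 using fun l : ℕ => hM (n₀ + 1 + l * (M + 1))
  set x : ℕ → Fin r → ℝ := fun l i => (p l : ℝ) * (a i0 / ((N:ℝ) * a i)) with hx
  set q : ℕ → Fin r → ℤ := fun l i => round (x l i) with hq
  have F1 : ∀ l i, |x l i - q l i| < δ := by
    intro l i
    have := hp3 l (Sum.inl i)
    simpa [hβ, hx, hq] using this
  have F1' : ∀ l i, |(p l : ℝ) * (a i0 * lam i / a i) -
      round ((p l : ℝ) * (a i0 * lam i / a i))| < δ := by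
    intro l i
    have := hp3 l (Sum.inr i)
    simpa [hβ] using this
  have Fhalf : ∀ l i, |x l i - q l i| ≤ 1/2 := fun l i => abs_sub_round (x l i)
  have hNx : ∀ l i, (N:ℝ) * x l i = p l * (a i0 / a i) := by
    intro l i
    have hai := (ha i).ne'
    have hNne : (N:ℝ) ≠ 0 := by positivity
    simp only [hx]; field_simp
  have hNxa : ∀ l i, (N:ℝ) * x l i * a i = p l * a i0 := by
    intro l i
    rw [hNx l i]
    have hai := (ha i).ne'
    field_simp
  have hplb : ∀ l, (n₀ : ℝ) + 1 + l * (M + 1) ≤ p l := by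
    intro l
    exact_mod_cast hp1 l
  have F3 : ∀ l i, 1 ≤ x l i := by
    intro l i
    have h1 : (N:ℝ) * A ≤ n₀ * a i0 := by
      rw [div_le_iff₀ (ha i0)] at hn₀; exact hn₀
    have h2 : (n₀:ℝ) ≤ p l := by
      have := hplb l; have hl : (0:ℝ) ≤ (l:ℝ) * (M+1) := by positivity
      linarith
    have h3 : (N:ℝ) * a i ≤ p l * a i0 := by
      have h4 : (N:ℝ) * a i ≤ N * A := by nlinarith [ha i, haA i]
      have h5 : (n₀:ℝ) * a i0 ≤ p l * a i0 := by nlinarith [ha i0]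
      linarith
    have hNai : (0:ℝ) < (N:ℝ) * a i :=
      mul_pos (by exact_mod_cast hN) (ha i)
    have h6 : (1:ℝ) ≤ (p l * a i0) / ((N:ℝ) * a i) := by
      rw [le_div_iff₀ hNai]; linarith
    calc (1:ℝ) ≤ (p l * a i0) / ((N:ℝ) * a i) := h6
      _ = x l i := by simp only [hx]; ring
  have F4 : ∀ l i, 1 ≤ q l i := by
    intro l i
    have h1 : (0:ℝ) < q l i := by
      have := Fhalf l i
      have := F3 l i
      have habs := abs_le.mp (Fhalf l i)
      linarith [habs.1, habs.2]
    have : (0:ℤ) < q l i := by exact_mod_cast h1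
    omega
  clear_value i0 A δ β x q
  refine ⟨fun l i => (N:ℤ) * q l i, ?_, ?_, ?_, ?_, ?_, ?_⟩
  · -- lambda condition
    intro l i
    have hc := F1' l i
    set c : ℤ := round ((p l : ℝ) * (a i0 * lam i / a i)) with hcdef
    have key : (((N:ℤ) * q l i : ℤ) : ℝ) * lam i - c =
        ((p l : ℝ) * (a i0 * lam i / a i) - c) - (N:ℝ) * (x l i - q l i) * lam i := by
      push_cast
      linear_combination (lam i) * hNx l i
    have h5 : |(((N:ℤ) * q l i : ℤ) : ℝ) * lam i - c| < δ + N * δ * A := by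
      rw [key]
      calc |((p l : ℝ) * (a i0 * lam i / a i) - c) - (N:ℝ) * (x l i - q l i) * lam i|
          ≤ |(p l : ℝ) * (a i0 * lam i / a i) - c| + |(N:ℝ) * (x l i - q l i) * lam i| :=
            abs_sub _ _
        _ < δ + N * δ * A := by
            have e1 : |(N:ℝ) * (x l i - q l i) * lam i| =
                (N:ℝ) * |x l i - q l i| * |lam i| := by
              rw [abs_mul, abs_mul, abs_of_nonneg (by positivity : (0:ℝ) ≤ (N:ℝ))]
            have e2 : (N:ℝ) * |x l i - q l i| * |lam i| ≤ N * δ * A := by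
              have m1 : |x l i - (q l i : ℝ)| * |lam i| ≤ δ * A :=
                mul_le_mul (F1 l i).le (hlamA i) (abs_nonneg _) hδpos.le
              have m2 : (N:ℝ) * (|x l i - (q l i : ℝ)| * |lam i|) ≤ (N:ℝ) * (δ * A) :=
                mul_le_mul_of_nonneg_left m1 (by positivity)
              calc (N:ℝ) * |x l i - (q l i : ℝ)| * |lam i|
                  = (N:ℝ) * (|x l i - (q l i : ℝ)| * |lam i|) := by ring
                _ ≤ (N:ℝ) * (δ * A) := m2
                _ = N * δ * A := by ring
            rw [e1]
            linarith [hc, e2]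
    have h6 : δ + (N:ℝ) * δ * A < ε := by
      have h7 : δ * (1 + N * A) ≤ δ * (2 * N * A) := by nlinarith [hδpos.le, hNA]
      nlinarith [hδε, hε]
    calc |(((N:ℤ) * q l i : ℤ) : ℝ) * lam i - round ((((N:ℤ) * q l i : ℤ) : ℝ) * lam i)|
        ≤ |(((N:ℤ) * q l i : ℤ) : ℝ) * lam i - c| := round_le _ c
      _ < ε := lt_trans h5 h6
  · -- action matching
    intro l i
    have key : ∀ j, (((N:ℤ) * q l j : ℤ) : ℝ) * a j - (p l : ℝ) * a i0 =
        (N:ℝ) * a j * ((q l j : ℝ) - x l j) := by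
      intro j
      push_cast
      linear_combination hNxa l j
    have hb : ∀ j, |(((N:ℤ) * q l j : ℤ) : ℝ) * a j - (p l : ℝ) * a i0| < N * A * δ := by
      intro j
      have hpos : (0:ℝ) < (N:ℝ) * a j := mul_pos (by exact_mod_cast hN) (ha j)
      rw [key j, abs_mul, abs_of_nonneg hpos.le, abs_sub_comm]
      have h1 := F1 l j
      calc (N:ℝ) * a j * |x l j - (q l j : ℝ)| < (N:ℝ) * a j * δ :=
            mul_lt_mul_of_pos_left h1 hpos
        _ ≤ N * A * δ := by
            have h8 : (N:ℝ) * a j ≤ (N:ℝ) * A :=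
              mul_le_mul_of_nonneg_left (haA j) (by positivity)
            exact mul_le_mul_of_nonneg_right h8 hδpos.le
    calc |(((N:ℤ) * q l i0 : ℤ) : ℝ) * a i0 - (((N:ℤ) * q l i : ℤ) : ℝ) * a i|
        ≤ |(((N:ℤ) * q l i0 : ℤ) : ℝ) * a i0 - (p l : ℝ) * a i0| +
          |(((N:ℤ) * q l i : ℤ) : ℝ) * a i - (p l : ℝ) * a i0| := by
          calc |(((N:ℤ) * q l i0 : ℤ) : ℝ) * a i0 - (((N:ℤ) * q l i : ℤ) : ℝ) * a i|
              = |((((N:ℤ) * q l i0 : ℤ) : ℝ) * a i0 - (p l : ℝ) * a i0) -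
                ((((N:ℤ) * q l i : ℤ) : ℝ) * a i - (p l : ℝ) * a i0)| := by ring_nf
            _ ≤ _ := abs_sub _ _
      _ < N * A * δ + N * A * δ := add_lt_add (hb i0) (hb i)
      _ < σ := by
          have hx0 : (0:ℝ) ≤ N * A * δ :=
            mul_nonneg (mul_nonneg (Nat.cast_nonneg N) (by linarith)) hδpos.le
          linarith [hδσ, hσ, hx0]
  · -- positivity
    intro l i
    have hNz : (0:ℤ) < N := by exact_mod_cast hN
    show (0:ℤ) < (N:ℤ) * q l i
    exact mul_pos hNz (lt_of_lt_of_le zero_lt_one (F4 l i))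
  · -- tendsto
    intro i
    rw [← tendsto_intCast_atTop_iff (R := ℝ)]
    set c : ℝ := a i0 / a i with hcdef
    have hc : 0 < c := div_pos (ha i0) (ha i)
    have hmono : ∀ l : ℕ, (l:ℝ) * c + (-(N:ℝ)) ≤ (((N:ℤ) * q l i : ℤ) : ℝ) := by
      intro l
      push_cast
      have h1 := Fhalf l i
      have habs := abs_le.mp h1
      have h2 : (l : ℝ) ≤ p l := by
        have := hplb l
        have hl : (0:ℝ) ≤ (M:ℝ) := by positivity
        nlinarith [(Nat.cast_nonneg l : (0:ℝ) ≤ (l:ℝ)), hl]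
      have h3 : (N:ℝ) * x l i = (p l : ℝ) * c := by rw [hcdef]; exact hNx l i
      have h4 : (N:ℝ) * (x l i - q l i) ≤ (N:ℝ) * (1/2) :=
        mul_le_mul_of_nonneg_left habs.2 (by positivity)
      have h5 : ((p l : ℝ) - l) * c ≥ 0 := mul_nonneg (by linarith) hc.le
      nlinarith [hN1]
    apply tendsto_atTop_mono hmono
    apply tendsto_atTop_add_const_right
    exact Tendsto.atTop_mul_const hc tendsto_natCast_atTop_atTop
  · -- bounded gap
    refine ⟨⌈(2*(M:ℝ)+1) * A / σ⌉ + N, fun l i => ?_⟩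
    have hplub := hp2 l
    have hpllb := hplb (l+1)
    have hdp : (0:ℝ) ≤ (p (l+1) : ℝ) - p l ∧ (p (l+1) : ℝ) - p l ≤ 2*M+1 := by
      constructor
      · have h1 := hplb (l+1)
        have h2 : (p l : ℝ) ≤ (n₀:ℝ) + 1 + l * (M+1) + M := by exact_mod_cast hp2 l
        push_cast at h1 ⊢
        nlinarith
      · have h1 : (p (l+1) : ℝ) ≤ (n₀:ℝ) + 1 + (l+1) * (M+1) + M := by
          exact_mod_cast hp2 (l+1)
        have h2 : (n₀:ℝ) + 1 + l * (M+1) ≤ p l := hplb l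
        push_cast at h1 ⊢
        nlinarith
    have hci : a i0 / a i ≤ A / σ :=
      div_le_div₀ (by linarith) (haA i0) hσ (hσa i).le
    have hxd : |(N:ℝ) * (x (l+1) i - x l i)| ≤ (2*(M:ℝ)+1) * A / σ := by
      have h1 : (N:ℝ) * (x (l+1) i - x l i) = ((p (l+1) : ℝ) - p l) * (a i0 / a i) := by
        linear_combination hNx (l+1) i - hNx l i
      rw [h1, abs_of_nonneg (mul_nonneg hdp.1 (div_nonneg (ha i0).le (ha i).le))]
      have := hdp.2
      have h2 : (0:ℝ) ≤ (p (l+1) : ℝ) - p l := hdp.1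
      calc ((p (l+1) : ℝ) - p l) * (a i0 / a i) ≤ (2*(M:ℝ)+1) * (a i0 / a i) := by
            nlinarith [div_nonneg (ha i0).le (ha i).le]
        _ ≤ (2*(M:ℝ)+1) * (A / σ) := by
            have hM0 : (0:ℝ) ≤ 2*(M:ℝ)+1 := by positivity
            nlinarith [hci]
        _ = (2*(M:ℝ)+1) * A / σ := by ring
    have hreal : |(((N:ℤ) * q (l+1) i - (N:ℤ) * q l i : ℤ) : ℝ)| ≤
        (2*(M:ℝ)+1) * A / σ + N := by
      push_cast
      have e1 : (N:ℝ) * (q (l+1) i : ℝ) - N * (q l i : ℝ) =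
          (N:ℝ) * (x (l+1) i - x l i) - N * (x (l+1) i - q (l+1) i)
          + N * (x l i - q l i) := by ring
      rw [e1]
      have habsN : ∀ l', |(N:ℝ) * (x l' i - q l' i)| ≤ N/2 := by
        intro l'
        rw [abs_mul, abs_of_nonneg (by positivity : (0:ℝ) ≤ (N:ℝ))]
        have h9 := Fhalf l' i
        nlinarith [(Nat.cast_nonneg N : (0:ℝ) ≤ (N:ℝ))]
      have t1 := habsN (l+1)
      have t2 := habsN l
      have t3 := abs_le.mp hxd
      rw [abs_le]
      have u1 := abs_le.mp t1
      have u2 := abs_le.mp t2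
      constructor <;> [linarith [u1.1, u1.2, u2.1, u2.2, t3.1, t3.2, hN1];
        linarith [u1.1, u1.2, u2.1, u2.2, t3.1, t3.2, hN1]]
    rw [← @Int.cast_le ℝ]
    push_cast
    push_cast at hreal
    calc |(N:ℝ) * (q (l+1) i : ℝ) - N * (q l i : ℝ)| ≤ (2*(M:ℝ)+1) * A / σ + N := hreal
      _ ≤ (⌈(2*(M:ℝ)+1) * A / σ⌉ : ℝ) + N := by linarith [Int.le_ceil ((2*(M:ℝ)+1) * A / σ)]
  · -- divisibility
    intro l i
    exact ⟨q l i, rfl⟩
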